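/- Let {x_k} be a sequence in a linear n-normed space X such that sup_k |T(x_k, b₂, ..., bₙ)| < ∞ for every bounded b-linear functional T ∈ X*_F. Then sup_k ‖x_k, b₂, ..., bₙ‖ < ∞. -/

import Mathlib

open Function Filter Topology

/-- An `n`-norm on a real vector space `X` (axioms N1-N4). -/
structure NNorm (n : ℕ) (X : Type*) [AddCommGroup X] [Module ℝ X] where
  toFun : (Fin n → X) → ℝ
  eq_zero_iff : ∀ v : Fin n → X, toFun v = 0 ↔ ¬ LinearIndependent ℝ v
  perm_invariant : ∀ (σ : Equiv.Perm (Fin n)) (v : Fin n → X), toFun (v ∘ σ) = toFun v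
  smul_eq : ∀ (α : ℝ) (v : Fin n → X) (i : Fin n),
      toFun (Function.update v i (α • v i)) = |α| * toFun v
  add_le : ∀ (v : Fin n → X) (i : Fin n) (x y : X),
      toFun (Function.update v i (x + y)) ≤
        toFun (Function.update v i x) + toFun (Function.update v i y)

variable {n : ℕ} {X : Type*} [AddCommGroup X] [Module ℝ X]

/-- The seminorm `x ↦ ‖x, b₂, …, bₙ‖` obtained by fixing the vectors `b` in all slots
but the first. -/
noncomputable def bsem (N : NNorm (n + 1) X) (b : Fin (n + 1) → X) (x : X) : ℝ :=
  N.toFun (Function.update b 0 x)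

section Generic

variable {V : Type*} [AddCommGroup V] [Module ℝ V]

/-- A `b`-linear functional: additive and homogeneous in its first argument. -/
def IsBLinear (T : V → ℝ) : Prop :=
  (∀ x y : V, T (x + y) = T x + T y) ∧ ∀ (k : ℝ) (x : V), T (k • x) = k * T x

/-- A bounded `b`-linear functional with respect to a seminorm `p`. -/
def IsBddBLinearP (p : V → ℝ) (T : V → ℝ) : Prop :=
  IsBLinear T ∧ ∃ M > 0, ∀ x : V, |T x| ≤ M * p x

/-- The norm of a bounded `b`-linear functional with respect to a seminorm `p`. -/
noncomputable def bnormP (p : V → ℝ) (T : V → ℝ) : ℝ :=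
  sInf {M : ℝ | 0 < M ∧ ∀ x : V, |T x| ≤ M * p x}

end Generic

/-- A bounded `b`-linear functional on `X × ⟨b₂⟩ × ⋯ × ⟨bₙ⟩`. -/
def IsBddBLinear (N : NNorm (n + 1) X) (b : Fin (n + 1) → X) (T : X → ℝ) : Prop :=
  IsBddBLinearP (bsem N b) T

/-- The norm of a bounded `b`-linear functional on `X × ⟨b₂⟩ × ⋯ × ⟨bₙ⟩`. -/
noncomputable def bnorm (N : NNorm (n + 1) X) (b : Fin (n + 1) → X) (T : X → ℝ) : ℝ :=
  bnormP (bsem N b) T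

/-- Convergence of a sequence in a linear `n`-normed space. -/
def NConv (N : NNorm (n + 1) X) (u : ℕ → X) (x : X) : Prop :=
  ∀ v : Fin (n + 1) → X,
    Tendsto (fun k => N.toFun (Function.update v 0 (u k - x))) atTop (nhds 0)

/-- A subspace is closed if it contains all limits of its convergent sequences. -/
def IsClosedSub (N : NNorm (n + 1) X) (W : Submodule ℝ X) : Prop :=
  ∀ u : ℕ → X, (∀ k, u k ∈ W) → ∀ x : X, NConv N u x → x ∈ W

/-- `b`-weak convergence of a sequence. -/
def BWeakConv (N : NNorm (n + 1) X) (b : Fin (n + 1) → X) (u : ℕ → X) (x : X) : Prop :=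
  ∀ T : X → ℝ, IsBddBLinear N b T →
    Tendsto (fun k => T (u k)) atTop (nhds (T x))


section Proof

variable (N : NNorm (n + 1) X) (b : Fin (n + 1) → X)

lemma bsem_add_le (x y : X) : bsem N b (x + y) ≤ bsem N b x + bsem N b y :=
  N.add_le b 0 x y

lemma bsem_smul (c : ℝ) (x : X) : bsem N b (c • x) = |c| * bsem N b x := by
  have h := N.smul_eq c (Function.update b 0 x) 0
  simpa [bsem, Function.update_idem] using h

lemma bsem_zero : bsem N b 0 = 0 := by
  have h := bsem_smul N b 0 (0 : X)
  simpa using h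

lemma bsem_neg (x : X) : bsem N b (-x) = bsem N b x := by
  have h := bsem_smul N b (-1) x
  simpa using h

lemma bsem_nonneg (x : X) : 0 ≤ bsem N b x := by
  have h1 : bsem N b (x + (-x)) ≤ bsem N b x + bsem N b (-x) := bsem_add_le N b x (-x)
  rw [add_neg_cancel, bsem_zero, bsem_neg] at h1
  linarith

/-- Hahn–Banach: for every `x` there is a linear functional `g` with `g x = ‖x,b₂,…,bₙ‖`
and `|g y| ≤ ‖y,b₂,…,bₙ‖` for all `y`. -/
lemma exists_functional (x : X) :
    ∃ g : X →ₗ[ℝ] ℝ, g x = bsem N b x ∧ ∀ y, |g y| ≤ bsem N b y := by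
  by_cases hx : x = 0
  · refine ⟨0, by simp [hx, bsem_zero], fun y => by simpa using bsem_nonneg N b y⟩
  · have H : ∀ c : ℝ, c • x = 0 → c • bsem N b x = 0 := by
      intro c hc
      rcases smul_eq_zero.1 hc with h | h
      · simp [h]
      · exact absurd h hx
    set f : X →ₗ.[ℝ] ℝ := LinearPMap.mkSpanSingleton' x (bsem N b x) H with hf
    have hdom : f.domain = (Submodule.span ℝ {x}) := rfl
    have hfapp : ∀ (c : ℝ) (h : c • x ∈ f.domain), f ⟨c • x, h⟩ = c * bsem N b x := by
      intro c h
      rw [LinearPMap.mkSpanSingleton'_apply x (bsem N b x) H c h, smul_eq_mul, RingHom.id_apply]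
    have hfle : ∀ z : f.domain, f z ≤ bsem N b (z : X) := by
      rintro ⟨z, hz⟩
      rcases Submodule.mem_span_singleton.1 hz with ⟨c, rfl⟩
      rw [hfapp c hz, bsem_smul]
      exact mul_le_mul_of_nonneg_right (le_abs_self c) (bsem_nonneg N b x)
    obtain ⟨g, hg1, hg2⟩ := exists_extension_of_le_sublinear f (bsem N b)
      (fun c hc y => by rw [bsem_smul, abs_of_pos hc]) (bsem_add_le N b) hfle
    have hxmem : x ∈ f.domain := by
      rw [hdom]; exact Submodule.mem_span_singleton_self x
    have hgx : g x = bsem N b x := by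
      have := hg1 ⟨x, hxmem⟩
      have h2 : f ⟨x, hxmem⟩ = bsem N b x := by
        have h3 : (1 : ℝ) • x ∈ f.domain := by simpa using hxmem
        have := hfapp 1 h3
        simpa using this
      simpa [h2] using this
    refine ⟨g, hgx, fun y => abs_le.2 ⟨?_, hg2 y⟩⟩
    have := hg2 (-y)
    rw [map_neg, bsem_neg] at this
    linarith

/-- A type synonym for `X` carrying the seminorm `bsem N b` as a norm. -/
@[nolint unusedArguments]
def Syn (N : NNorm (n + 1) X) (b : Fin (n + 1) → X) : Type _ := X

instance : AddCommGroup (Syn N b) := inferInstanceAs (AddCommGroup X)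
instance : Module ℝ (Syn N b) := inferInstanceAs (Module ℝ X)

/-- `bsem N b` as an `AddGroupSeminorm` on the synonym. -/
noncomputable def bAGSeminorm : AddGroupSeminorm (Syn N b) where
  toFun x := bsem N b x
  map_zero' := bsem_zero N b
  add_le' x y := bsem_add_le N b x y
  neg' x := bsem_neg N b x

noncomputable instance : SeminormedAddCommGroup (Syn N b) :=
  (bAGSeminorm N b).toSeminormedAddCommGroup

lemma syn_norm (x : Syn N b) : ‖x‖ = bsem N b x := rfl

noncomputable instance : NormedSpace ℝ (Syn N b) where
  norm_smul_le c x := by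
    rw [syn_norm, syn_norm]
    rw [show (c • x : Syn N b) = ((c • x : X) : Syn N b) from rfl]
    refine (bsem_smul N b c (show X from x)).le.trans ?_
    simp [Real.norm_eq_abs]

end Proof

theorem stmt8 (N : NNorm (n + 1) X) (b : Fin (n + 1) → X)
    (hdim : ↑(n + 1) ≤ Module.rank ℝ X) (u : ℕ → X)
    (h : ∀ T : X → ℝ, IsBddBLinear N b T → ∃ C : ℝ, ∀ k, |T (u k)| ≤ C) :
    ∃ C : ℝ, ∀ k, bsem N b (u k) ≤ C := by
  classical
  set φ : ℕ → (Syn N b →L[ℝ] ℝ) →L[ℝ] ℝ :=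
    fun k => ContinuousLinearMap.apply ℝ ℝ (show Syn N b from u k) with hφ
  have hpt : ∀ f : Syn N b →L[ℝ] ℝ, ∃ C, ∀ k, ‖φ k f‖ ≤ C := by
    intro f
    have hT : IsBddBLinear N b (fun x : X => f (show Syn N b from x)) := by
      refine ⟨⟨fun x y => by exact map_add f x y, fun c x => by
        exact map_smul f c (show Syn N b from x)⟩, ‖f‖ + 1, ?_, ?_⟩
      · positivity
      · intro x
        calc |f (show Syn N b from x)| ≤ ‖f‖ * ‖show Syn N b from x‖ := f.le_opNorm _
          _ ≤ (‖f‖ + 1) * bsem N b x := by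
              rw [syn_norm]
              exact mul_le_mul_of_nonneg_right (by linarith) (bsem_nonneg N b x)
    obtain ⟨C, hC⟩ := h _ hT
    exact ⟨C, fun k => by rw [Real.norm_eq_abs]; exact hC k⟩
  obtain ⟨C', hC'⟩ := banach_steinhaus hpt
  refine ⟨C', fun k => ?_⟩
  obtain ⟨g, hgx, hgle⟩ := exists_functional N b (u k)
  -- transport `g` to a continuous linear map on `Syn N b`
  set g' : Syn N b →ₗ[ℝ] ℝ :=
    { toFun := fun y => g (show X from y)
      map_add' := fun x y => by exact map_add g x y
      map_smul' := fun c x => by exact map_smul g c (show X from x) } with hg'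
  set G : Syn N b →L[ℝ] ℝ := g'.mkContinuous 1 (fun y => by
    rw [one_mul, Real.norm_eq_abs, syn_norm]; exact hgle (show X from y)) with hG
  have hGnorm : ‖G‖ ≤ 1 := g'.mkContinuous_norm_le zero_le_one _
  have h1 : bsem N b (u k) = G (show Syn N b from u k) := by
    rw [hG]
    rw [show (G : Syn N b → ℝ) = (g' : Syn N b → ℝ) from rfl] at *
    exact hgx.symm
  calc bsem N b (u k) = G (show Syn N b from u k) := h1
    _ ≤ |φ k G| := by rw [hφ]; exact le_abs_self _
    _ ≤ ‖φ k‖ * ‖G‖ := (φ k).le_opNorm G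
    _ ≤ C' * 1 := by
        have h0 : (0:ℝ) ≤ ‖φ k‖ := (φ k).opNorm_nonneg
        exact mul_le_mul (hC' k) hGnorm (norm_nonneg _) (le_trans h0 (hC' k))
    _ = C' := mul_one _
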